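/- Consider the POVM {ρ, I−ρ} for a pure state ρ on a d-dimensional space, and R ∈ ℕ repetitions. For γ = (ε/2)^{2/R} with ε ∈ (0, 1/4), the value of the optimization max over density matrices χ₁, χ₂ of (1/2)(tr(ρχ₁) − tr(ρχ₂)) subject to (√(tr(ρχ₁)tr(ρχ₂)) + √((1−tr(ρχ₁))(1−tr(ρχ₂))))^R ≥ ε/2 equals (1/2)√(1 − (ε/2)^{2/R}). -/

import Mathlib

open ComplexOrder Matrix

lemma smul_psd {n : ℕ} (r : ℝ) (hr : 0 ≤ r) {M : Matrix (Fin n) (Fin n) ℂ}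
    (hM : M.PosSemidef) : ((r : ℂ) • M).PosSemidef := by
  refine Matrix.PosSemidef.of_dotProduct_mulVec_nonneg ?_ ?_
  · unfold Matrix.IsHermitian
    rw [Matrix.conjTranspose_smul, hM.1.eq]
    congr 1
    simp [Complex.star_def, Complex.conj_ofReal]
  · intro x
    have h := hM.dotProduct_mulVec_nonneg x
    rw [Matrix.smul_mulVec, dotProduct_smul, smul_eq_mul]
    exact mul_nonneg (by exact_mod_cast hr) h

lemma trace_mul_re_nonneg {n : ℕ} (A B : Matrix (Fin n) (Fin n) ℂ)
    (hA : A.PosSemidef) (hB : B.PosSemidef) : 0 ≤ (A * B).trace.re := by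
  obtain ⟨C, hC⟩ : ∃ C : Matrix (Fin n) (Fin n) ℂ, B = Cᴴ * C := by
    open scoped MatrixOrder in
    obtain ⟨C, hC⟩ := CStarAlgebra.nonneg_iff_eq_star_mul_self.mp hB.nonneg
    exact ⟨C, by rw [hC, Matrix.star_eq_conjTranspose]⟩
  have h1 : (A * B).trace = (C * A * Cᴴ).trace := by
    rw [hC, ← Matrix.mul_assoc, Matrix.trace_mul_comm, Matrix.mul_assoc]
  have hP : (C * A * Cᴴ).PosSemidef := hA.mul_mul_conjTranspose_same C
  have hdiag : ∀ i, 0 ≤ ((C * A * Cᴴ) i i).re := by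
    intro i
    have := hP.re_dotProduct_nonneg (Pi.single i 1)
    simpa [dotProduct, Matrix.mulVec, Pi.single_apply, Finset.mul_sum,
      apply_ite] using this
  rw [h1, Matrix.trace]
  rw [Complex.re_sum]
  exact Finset.sum_nonneg fun i _ => hdiag i

lemma chi_exists {d : ℕ} (hd : 2 ≤ d) (ρ : Matrix (Fin d) (Fin d) ℂ)
    (hρH : ρ.IsHermitian) (hρ2 : ρ * ρ = ρ) (hρtr : ρ.trace = 1)
    (a : ℝ) (ha0 : 0 ≤ a) (ha1 : a ≤ 1) :
    ∃ χ : Matrix (Fin d) (Fin d) ℂ,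
      χ.PosSemidef ∧ χ.trace = 1 ∧ (ρ * χ).trace = (a : ℂ) := by
  have hρPSD : ρ.PosSemidef := by
    have := Matrix.posSemidef_conjTranspose_mul_self ρ
    rwa [hρH.eq, hρ2] at this
  have h1ρH : (1 - ρ).IsHermitian := Matrix.isHermitian_one.sub hρH
  have h1ρ2 : (1 - ρ) * (1 - ρ) = 1 - ρ := by
    rw [Matrix.sub_mul, Matrix.one_mul, Matrix.mul_sub, Matrix.mul_one, hρ2]
    abel
  have h1ρPSD : (1 - ρ).PosSemidef := by
    have := Matrix.posSemidef_conjTranspose_mul_self (1 - ρ)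
    rwa [h1ρH.eq, h1ρ2] at this
  set c : ℝ := (1 - a) / ((d : ℝ) - 1) with hc
  have hd1 : (1 : ℝ) ≤ (d : ℝ) - 1 := by
    have : (2 : ℝ) ≤ (d : ℝ) := by exact_mod_cast hd
    linarith
  have hc0 : 0 ≤ c := div_nonneg (by linarith) (by linarith)
  have hdc : ((d : ℂ) - 1) ≠ 0 := by
    have : (d : ℂ) ≠ 1 := by
      intro h
      have : (d : ℂ) = ((1 : ℕ) : ℂ) := by simpa using h
      have := Nat.cast_injective (R := ℂ) this
      omega
    exact sub_ne_zero.mpr this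
  refine ⟨(a : ℂ) • ρ + (c : ℂ) • (1 - ρ), ?_, ?_, ?_⟩
  · exact ((smul_psd a ha0 hρPSD).add (smul_psd c hc0 h1ρPSD))
  · rw [Matrix.trace_add, Matrix.trace_smul, Matrix.trace_smul, Matrix.trace_sub,
      hρtr, Matrix.trace_one]
    simp only [smul_eq_mul, hc, Fintype.card_fin]
    push_cast
    field_simp
    ring
  · have hmul : ρ * ((a : ℂ) • ρ + (c : ℂ) • (1 - ρ)) = (a : ℂ) • ρ := by
      rw [Matrix.mul_add, Matrix.mul_smul, Matrix.mul_smul, Matrix.mul_sub,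
        Matrix.mul_one, hρ2]
      simp
    rw [hmul, Matrix.trace_smul, hρtr]
    simp

lemma scalar_bound (γ a₁ a₂ : ℝ) (hγ0 : 0 ≤ γ)
    (h01 : 0 ≤ a₁) (h11 : a₁ ≤ 1) (h02 : 0 ≤ a₂) (h12 : a₂ ≤ 1)
    (hF : Real.sqrt γ ≤ Real.sqrt (a₁ * a₂) + Real.sqrt ((1 - a₁) * (1 - a₂))) :
    a₁ - a₂ ≤ Real.sqrt (1 - γ) := by
  have hA2 : (Real.sqrt (a₁ * a₂)) ^ 2 = a₁ * a₂ :=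
    Real.sq_sqrt (mul_nonneg h01 h02)
  have hB2 : (Real.sqrt ((1 - a₁) * (1 - a₂))) ^ 2 = (1 - a₁) * (1 - a₂) :=
    Real.sq_sqrt (mul_nonneg (by linarith) (by linarith))
  have hu2 : (Real.sqrt (a₁ * (1 - a₁))) ^ 2 = a₁ * (1 - a₁) :=
    Real.sq_sqrt (mul_nonneg h01 (by linarith))
  have hv2 : (Real.sqrt (a₂ * (1 - a₂))) ^ 2 = a₂ * (1 - a₂) :=
    Real.sq_sqrt (mul_nonneg h02 (by linarith))
  have hprod : Real.sqrt (a₁ * a₂) * Real.sqrt ((1 - a₁) * (1 - a₂)) =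
      Real.sqrt (a₁ * (1 - a₁)) * Real.sqrt (a₂ * (1 - a₂)) := by
    rw [← Real.sqrt_mul (mul_nonneg h01 h02),
        ← Real.sqrt_mul (mul_nonneg h01 (by linarith))]
    congr 1
    ring
  have hγF : γ ≤ (Real.sqrt (a₁ * a₂) + Real.sqrt ((1 - a₁) * (1 - a₂))) ^ 2 := by
    calc γ = (Real.sqrt γ) ^ 2 := (Real.sq_sqrt hγ0).symm
    _ ≤ _ := pow_le_pow_left₀ (Real.sqrt_nonneg _) hF 2
  have hsq : (a₁ - a₂) ^ 2 ≤ 1 - γ := by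
    nlinarith [sq_nonneg (Real.sqrt (a₁ * (1 - a₁)) - Real.sqrt (a₂ * (1 - a₂))),
      Real.sqrt_nonneg (a₁ * a₂), Real.sqrt_nonneg ((1 - a₁) * (1 - a₂))]
  calc a₁ - a₂ ≤ |a₁ - a₂| := le_abs_self _
  _ = Real.sqrt ((a₁ - a₂) ^ 2) := (Real.sqrt_sq_eq_abs _).symm
  _ ≤ Real.sqrt (1 - γ) := Real.sqrt_le_sqrt hsq

theorem stmt_8 (d : ℕ) (hd : 2 ≤ d) (R : ℕ) (hR : 0 < R)
    (ε : ℝ) (hε : ε ∈ Set.Ioo (0:ℝ) (1/4))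
    (ρ : Matrix (Fin d) (Fin d) ℂ)
    (hρH : ρ.IsHermitian) (hρ2 : ρ * ρ = ρ) (hρtr : ρ.trace = 1) :
    IsGreatest {v : ℝ | ∃ χ₁ χ₂ : Matrix (Fin d) (Fin d) ℂ,
      χ₁.PosSemidef ∧ χ₁.trace = 1 ∧ χ₂.PosSemidef ∧ χ₂.trace = 1 ∧
      (Real.sqrt ((ρ * χ₁).trace.re * (ρ * χ₂).trace.re)
        + Real.sqrt ((1 - (ρ * χ₁).trace.re) * (1 - (ρ * χ₂).trace.re)))^R ≥ ε/2 ∧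
      v = (1/2) * ((ρ * χ₁).trace.re - (ρ * χ₂).trace.re)}
      ((1/2) * Real.sqrt (1 - (ε/2) ^ ((2:ℝ)/(R:ℝ)))) := by
  have hε0 : 0 < ε / 2 := by linarith [hε.1]
  have hε1 : ε / 2 < 1 := by linarith [hε.2]
  have hRne : (R : ℝ) ≠ 0 := Nat.cast_ne_zero.mpr hR.ne'
  have hRpos : (0 : ℝ) < R := Nat.cast_pos.mpr hR
  set γ : ℝ := (ε / 2) ^ ((2 : ℝ) / (R : ℝ)) with hγdef
  have hγ0 : 0 < γ := Real.rpow_pos_of_pos hε0 _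
  have hγ1 : γ < 1 := Real.rpow_lt_one hε0.le hε1 (by positivity)
  have hsqrtγ : Real.sqrt γ = (ε / 2) ^ ((1 : ℝ) / (R : ℝ)) := by
    rw [Real.sqrt_eq_rpow, hγdef, ← Real.rpow_mul hε0.le]
    congr 1
    field_simp
  have hpowR : (Real.sqrt γ) ^ R = ε / 2 := by
    rw [hsqrtγ, ← Real.rpow_natCast ((ε/2) ^ ((1:ℝ)/(R:ℝ))) R, ← Real.rpow_mul hε0.le]
    rw [show (1 : ℝ) / (R : ℝ) * (R : ℕ) = 1 by field_simp]
    exact Real.rpow_one _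
  have hρPSD : ρ.PosSemidef := by
    have := Matrix.posSemidef_conjTranspose_mul_self ρ
    rwa [hρH.eq, hρ2] at this
  have h1ρH : (1 - ρ).IsHermitian := Matrix.isHermitian_one.sub hρH
  have h1ρ2 : (1 - ρ) * (1 - ρ) = 1 - ρ := by
    rw [Matrix.sub_mul, Matrix.one_mul, Matrix.mul_sub, Matrix.mul_one, hρ2]
    abel
  have h1ρPSD : (1 - ρ).PosSemidef := by
    have := Matrix.posSemidef_conjTranspose_mul_self (1 - ρ)
    rwa [h1ρH.eq, h1ρ2] at this
  -- bounds for any feasible χ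
  have hbounds : ∀ χ : Matrix (Fin d) (Fin d) ℂ, χ.PosSemidef → χ.trace = 1 →
      0 ≤ (ρ * χ).trace.re ∧ (ρ * χ).trace.re ≤ 1 := by
    intro χ hχ hχt
    constructor
    · exact trace_mul_re_nonneg ρ χ hρPSD hχ
    · have h2 := trace_mul_re_nonneg (1 - ρ) χ h1ρPSD hχ
      have h3 : ((1 - ρ) * χ).trace = χ.trace - (ρ * χ).trace := by
        rw [Matrix.sub_mul, Matrix.one_mul, Matrix.trace_sub]
      rw [h3, hχt] at h2
      simp only [Complex.sub_re, Complex.one_re] at h2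
      linarith
  set s : ℝ := Real.sqrt (1 - γ) with hsdef
  have hs0 : 0 ≤ s := Real.sqrt_nonneg _
  have hs1 : s ≤ 1 := Real.sqrt_le_one.mpr (by linarith)
  have hs2 : s ^ 2 = 1 - γ := Real.sq_sqrt (by linarith)
  constructor
  · -- membership
    obtain ⟨χ₁, hχ₁P, hχ₁t, hχ₁tr⟩ :=
      chi_exists hd ρ hρH hρ2 hρtr ((1 + s) / 2) (by linarith) (by linarith)
    obtain ⟨χ₂, hχ₂P, hχ₂t, hχ₂tr⟩ :=
      chi_exists hd ρ hρH hρ2 hρtr ((1 - s) / 2) (by linarith) (by linarith)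
    refine ⟨χ₁, χ₂, hχ₁P, hχ₁t, hχ₂P, hχ₂t, ?_, ?_⟩
    · have hr₁ : (ρ * χ₁).trace.re = (1 + s) / 2 := by rw [hχ₁tr, Complex.ofReal_re]
      have hr₂ : (ρ * χ₂).trace.re = (1 - s) / 2 := by rw [hχ₂tr, Complex.ofReal_re]
      rw [hr₁, hr₂]
      have e1 : (1 + s) / 2 * ((1 - s) / 2) = γ / 4 := by nlinarith
      have e2 : (1 - (1 + s) / 2) * (1 - (1 - s) / 2) = γ / 4 := by nlinarith
      rw [e1, e2]
      have e3 : Real.sqrt (γ / 4) = Real.sqrt γ / 2 := by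
        rw [show (2:ℝ) = Real.sqrt 4 by rw [show (4:ℝ) = 2^2 by norm_num, Real.sqrt_sq]; norm_num]
        exact Real.sqrt_div hγ0.le 4
      rw [e3, show Real.sqrt γ / 2 + Real.sqrt γ / 2 = Real.sqrt γ by ring, hpowR]
    · rw [hχ₁tr, hχ₂tr, Complex.ofReal_re, Complex.ofReal_re]
      ring
  · -- upper bound
    rintro v ⟨χ₁, χ₂, hχ₁P, hχ₁t, hχ₂P, hχ₂t, hcon, hv⟩
    obtain ⟨h01, h11⟩ := hbounds χ₁ hχ₁P hχ₁t
    obtain ⟨h02, h12⟩ := hbounds χ₂ hχ₂P hχ₂t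
    set a₁ := (ρ * χ₁).trace.re
    set a₂ := (ρ * χ₂).trace.re
    have hFnn : 0 ≤ Real.sqrt (a₁ * a₂) + Real.sqrt ((1 - a₁) * (1 - a₂)) := by
      positivity
    have hF : Real.sqrt γ ≤ Real.sqrt (a₁ * a₂) + Real.sqrt ((1 - a₁) * (1 - a₂)) := by
      have := hcon
      rw [← hpowR] at this
      exact (pow_le_pow_iff_left₀ (Real.sqrt_nonneg _) hFnn hR.ne').mp this
    have := scalar_bound γ a₁ a₂ hγ0.le h01 h11 h02 h12 hF
    rw [hv]
    linarith
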